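/- arXiv:2112.04169 — 2 statements merged into one kernel-verified Lean document; each statement's English description precedes it below -/
import Mathlib

section
/- For every positive integer b, E[min(Pois(b), b)]/b = 1 - e^{-b} b^b / b!, where Pois(b) is a Poisson random variable with mean b. -/
open Real Finset

/-- Poisson pmf with rate `l`. -/
noncomputable def ppmf (l : ℝ) (k : ℕ) : ℝ := Real.exp (-l) * l ^ k / (Nat.factorial k)

/-- Expected value of `min(Pois(l), b)`. -/
noncomputable def truncMean (l : ℝ) (b : ℕ) : ℝ := ∑' k : ℕ, ppmf l k * (min k b : ℕ)

lemma ppmf_nonneg {l : ℝ} (hl : 0 ≤ l) (k : ℕ) : 0 ≤ ppmf l k := by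
  unfold ppmf; positivity

lemma ppmf_summable (l : ℝ) : Summable (ppmf l) := by
  exact ((Real.summable_pow_div_factorial l).mul_left (Real.exp (-l))).congr fun k => by simp [ppmf, mul_div_assoc]

lemma ppmf_tsum (l : ℝ) : ∑' k, ppmf l k = 1 := by
  have h : ∑' k : ℕ, l ^ k / (Nat.factorial k) = Real.exp l := by
    rw [Real.exp_eq_exp_ℝ, NormedSpace.exp_eq_tsum_div]
  calc ∑' k, ppmf l k = Real.exp (-l) * ∑' k : ℕ, l ^ k / (Nat.factorial k) := by
        rw [← tsum_mul_left]; simp [ppmf, mul_div_assoc]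
    _ = 1 := by rw [h, ← Real.exp_add]; simp

lemma ppmf_key (l : ℝ) (k : ℕ) : ((k : ℝ) + 1) * ppmf l (k + 1) = l * ppmf l k := by
  unfold ppmf
  have h1 : (Nat.factorial k : ℝ) ≠ 0 := Nat.cast_ne_zero.2 (Nat.factorial_ne_zero k)
  have h2 : ((k : ℝ) + 1) ≠ 0 := by positivity
  rw [Nat.factorial_succ]
  push_cast
  field_simp
  ring

theorem truncMean_div_eq (b : ℕ) (hb : 0 < b) :
    truncMean b b / b = 1 - Real.exp (-(b : ℝ)) * (b : ℝ) ^ b / (Nat.factorial b) := by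
  set l : ℝ := (b : ℝ) with hl
  set p : ℕ → ℝ := ppmf l with hp
  have hbne : l ≠ 0 := by positivity
  have Sp : Summable p := ppmf_summable l
  have key : ∀ k : ℕ, ((k : ℝ) + 1) * p (k + 1) = l * p k := fun k => ppmf_key l k
  -- summability of k * p k
  have hshift : Summable (fun n => p (n + 1) * ((n : ℝ) + 1)) := by
    refine (Sp.mul_left l).congr fun n => ?_
    rw [mul_comm (p (n + 1)), key]
  have S1 : Summable (fun k : ℕ => p k * (k : ℝ)) := by
    refine (summable_nat_add_iff 1).1 (hshift.congr fun n => ?_)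
    push_cast; ring_nf
  -- mean = l
  have mean : ∑' k : ℕ, p k * (k : ℝ) = l := by
    rw [Summable.tsum_eq_zero_add S1]
    simp only [Nat.cast_zero, mul_zero, zero_add]
    have : ∑' n : ℕ, p (n + 1) * ((n : ℕ) + 1 : ℝ) = ∑' n : ℕ, l * p n := by
      refine tsum_congr fun n => ?_
      rw [mul_comm, key]
    push_cast at this ⊢
    rw [this, tsum_mul_left, ppmf_tsum, mul_one]
  -- excess function
  set g : ℕ → ℝ := fun k => p k * ((k - b : ℕ) : ℝ) with hg
  have hpnn : ∀ k, 0 ≤ p k := ppmf_nonneg (by positivity)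
  have Sg : Summable g := by
    refine Summable.of_nonneg_of_le (fun k => mul_nonneg (hpnn k) (Nat.cast_nonneg _)) (fun k => ?_) S1
    exact mul_le_mul_of_nonneg_left (by exact_mod_cast Nat.sub_le k b) (hpnn k)
  have Spb : Summable (fun n => p (n + b)) := (summable_nat_add_iff b).2 Sp
  have Spb1 : Summable (fun n => p (n + (b + 1))) := (summable_nat_add_iff (b + 1)).2 Sp
  have tsum_g : ∑' k, g k = l * p b := by
    have h0 : ∑ i ∈ Finset.range (b + 1), g i = 0 := by
      refine Finset.sum_eq_zero fun i hi => ?_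
      have : i - b = 0 := by
        simp only [Finset.mem_range] at hi; omega
      simp [hg, this]
    have hsplit := Summable.sum_add_tsum_nat_add (b + 1) Sg
    rw [h0, zero_add] at hsplit
    have hterm : ∀ n : ℕ, g (n + (b + 1)) = l * p (n + b) - l * p (n + (b + 1)) := by
      intro n
      have hk := key (n + b)
      have h2 : n + (b + 1) - b = n + 1 := by omega
      simp only [hg, h2]
      rw [show n + (b + 1) = n + b + 1 from by omega]
      push_cast at hk ⊢
      linear_combination hk + p (n + b + 1) * hl
    rw [← hsplit]
    calc ∑' n : ℕ, g (n + (b + 1))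
        = ∑' n : ℕ, (l * p (n + b) - l * p (n + (b + 1))) := tsum_congr hterm
      _ = l * ∑' n : ℕ, p (n + b) - l * ∑' n : ℕ, p (n + (b + 1)) := by
          rw [Summable.tsum_sub (Spb.mul_left l) (Spb1.mul_left l), tsum_mul_left, tsum_mul_left]
      _ = l * p b := by
          have := Summable.tsum_eq_zero_add Spb
          simp only [zero_add] at this
          rw [this]
          have : ∑' n : ℕ, p (n + 1 + b) = ∑' n : ℕ, p (n + (b + 1)) := by
            refine tsum_congr fun n => ?_
            congr 1; omega
          rw [this]; ring
  -- truncMean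
  have hmin : ∀ k : ℕ, p k * ((min k b : ℕ) : ℝ) = p k * (k : ℝ) - g k := by
    intro k
    have : ((min k b : ℕ) : ℝ) = (k : ℝ) - ((k - b : ℕ) : ℝ) := by
      have h : min k b + (k - b) = k := by omega
      have h2 := congrArg (Nat.cast (R := ℝ)) h
      rw [Nat.cast_add] at h2
      linarith
    rw [this]; simp [hg]; ring
  have htm : truncMean l b = l - l * p b := by
    unfold truncMean
    calc ∑' k : ℕ, ppmf l k * ((min k b : ℕ) : ℝ)
        = ∑' k : ℕ, (p k * (k : ℝ) - g k) := tsum_congr hmin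
      _ = l - l * p b := by rw [Summable.tsum_sub S1 Sg, mean, tsum_g]
  rw [htm]
  have hpb : p b = Real.exp (-l) * l ^ b / (Nat.factorial b) := rfl
  rw [hpb]
  have hfac : (Nat.factorial b : ℝ) ≠ 0 := Nat.cast_ne_zero.2 (Nat.factorial_ne_zero b)
  field_simp
end

section
/- For any positive integer b and real λ > 0, the integral from 0 to 1 of λ * Pr[Pois(λ*t) < b] dt equals E[min(Pois(λ), b)]. -/
open Real Finset

lemma hasDerivAt_ppmf_zero (t : ℝ) :
    HasDerivAt (fun s => ppmf s 0) (-(ppmf t 0)) t := by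
  have h := ((hasDerivAt_neg t).exp)
  unfold ppmf
  simpa using h

lemma hasDerivAt_ppmf_succ (j : ℕ) (t : ℝ) :
    HasDerivAt (fun s => ppmf s (j + 1)) (ppmf t j - ppmf t (j + 1)) t := by
  have h1 : HasDerivAt (fun s : ℝ => Real.exp (-s)) (Real.exp (-t) * (-1)) t :=
    (hasDerivAt_neg t).exp
  have h2 : HasDerivAt (fun s : ℝ => s ^ (j + 1)) ((j + 1 : ℕ) * t ^ j) t :=
    hasDerivAt_pow (j + 1) t
  have h3 := (h1.mul h2).div_const ((Nat.factorial (j + 1) : ℝ))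
  refine h3.congr_deriv ?_
  unfold ppmf
  have hf : (Nat.factorial (j + 1) : ℝ) = (j + 1) * Nat.factorial j := by
    push_cast [Nat.factorial_succ]; ring
  have hj : (Nat.factorial j : ℝ) ≠ 0 := Nat.cast_ne_zero.mpr (Nat.factorial_ne_zero j)
  have hj1 : ((j : ℝ) + 1) ≠ 0 := by positivity
  rw [hf]
  field_simp
  push_cast
  ring

lemma hasDerivAt_cdf (m : ℕ) (t : ℝ) :
    HasDerivAt (fun s => ∑ j ∈ Finset.range (m + 1), ppmf s j) (-(ppmf t m)) t := by
  induction m with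
  | zero => simpa using hasDerivAt_ppmf_zero t
  | succ n ih =>
    have h := ih.add (hasDerivAt_ppmf_succ n t)
    have hfun : (fun s => ∑ j ∈ Finset.range (n + 1 + 1), ppmf s j)
        = fun s => (∑ j ∈ Finset.range (n + 1), ppmf s j) + ppmf s (n + 1) := by
      funext s; rw [Finset.sum_range_succ]
    rw [hfun]
    refine h.congr_deriv ?_
    ring

lemma hasDerivAt_F (b : ℕ) (t : ℝ) :
    HasDerivAt (fun s => ∑ j ∈ Finset.range b, ((b : ℝ) - j) * ppmf s j)
      (-(∑ j ∈ Finset.range b, ppmf t j)) t := by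
  induction b with
  | zero => simpa using hasDerivAt_const t (0 : ℝ)
  | succ n ih =>
    have hc := hasDerivAt_cdf n t
    have h := ih.add hc
    have hfun : (fun s => ∑ j ∈ Finset.range (n + 1), ((n + 1 : ℕ) : ℝ) * ppmf s j
          - ∑ j ∈ Finset.range (n + 1), (j : ℝ) * ppmf s j)
        = fun s => (∑ j ∈ Finset.range n, ((n : ℝ) - j) * ppmf s j)
          + ∑ j ∈ Finset.range (n + 1), ppmf s j := by
      funext s
      rw [Finset.sum_range_succ (f := fun j => ((n + 1 : ℕ) : ℝ) * ppmf s j),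
        Finset.sum_range_succ (f := fun j => (j : ℝ) * ppmf s j),
        Finset.sum_range_succ (f := fun j => ppmf s j)]
      have hcg : ∀ j ∈ Finset.range n,
          ((n + 1 : ℕ) : ℝ) * ppmf s j
            = (((n : ℝ) - j) * ppmf s j + ppmf s j) + (j : ℝ) * ppmf s j := by
        intro j _; push_cast; ring
      rw [Finset.sum_congr rfl hcg, Finset.sum_add_distrib, Finset.sum_add_distrib]
      push_cast
      ring
    have hfun2 : (fun s => ∑ j ∈ Finset.range (n + 1), (((n + 1 : ℕ) : ℝ) - j) * ppmf s j)
        = (fun s => ∑ j ∈ Finset.range (n + 1), ((n + 1 : ℕ) : ℝ) * ppmf s j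
          - ∑ j ∈ Finset.range (n + 1), (j : ℝ) * ppmf s j) := by
      funext s
      rw [← Finset.sum_sub_distrib]
      apply Finset.sum_congr rfl; intro j _; ring
    rw [hfun2, hfun]
    refine h.congr_deriv ?_
    rw [Finset.sum_range_succ]
    ring

theorem integral_eq_truncMean_general (b : ℕ) (hb : 0 < b) (lam : ℝ) (hlam : 0 < lam) :
    (∫ t in (0 : ℝ)..1, lam * ∑ k ∈ Finset.range b, ppmf (lam * t) k)
      = truncMean lam b := by
  -- Antiderivative
  set G : ℝ → ℝ := fun t => -∑ j ∈ Finset.range b, ((b : ℝ) - j) * ppmf (lam * t) j with hGdef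
  have hG : ∀ t ∈ Set.uIcc (0 : ℝ) 1,
      HasDerivAt G (lam * ∑ k ∈ Finset.range b, ppmf (lam * t) k) t := by
    intro t _
    have hlin : HasDerivAt (fun s : ℝ => lam * s) lam t := by
      simpa using (hasDerivAt_id t).const_mul lam
    have h := ((hasDerivAt_F b (lam * t)).comp t hlin).neg
    refine h.congr_deriv ?_
    simp [Function.comp]
    ring
  have hcont : Continuous (fun t : ℝ => lam * ∑ k ∈ Finset.range b, ppmf (lam * t) k) := by
    unfold ppmf
    continuity
  have hint := intervalIntegral.integral_eq_sub_of_hasDerivAt hG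
    (hcont.intervalIntegrable 0 1)
  rw [hint]
  -- Compute G 1 - G 0
  have hG1 : G 1 = -∑ j ∈ Finset.range b, ((b : ℝ) - j) * ppmf lam j := by
    simp [hGdef]
  have hG0 : G 0 = -(b : ℝ) := by
    simp only [hGdef, mul_zero]
    have : ∑ j ∈ Finset.range b, ((b : ℝ) - j) * ppmf 0 j = (b : ℝ) := by
      rw [Finset.sum_eq_single 0]
      · simp [ppmf]
      · intro j _ hj
        simp [ppmf, zero_pow hj]
      · intro h; exact absurd (Finset.mem_range.mpr hb) h
    rw [this]
  rw [hG1, hG0]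
  -- Compute truncMean
  have hsum : Summable (fun k => ppmf lam k) := by
    unfold ppmf
    simp_rw [mul_div_assoc]
    exact (Real.summable_pow_div_factorial lam).mul_left _
  have htot : ∑' k, ppmf lam k = 1 := by
    unfold ppmf
    simp_rw [mul_div_assoc]
    rw [tsum_mul_left]
    have : ∑' k : ℕ, lam ^ k / (Nat.factorial k : ℝ) = Real.exp lam := by
      rw [Real.exp_eq_exp_ℝ, NormedSpace.exp_eq_tsum_div]
    rw [this, ← Real.exp_add]
    simp
  have hsumb : Summable (fun k => (b : ℝ) * ppmf lam k) := hsum.mul_left _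
  set h : ℕ → ℝ := fun k => ppmf lam k * ((b : ℝ) - (min k b : ℕ)) with hhdef
  have hzero : ∀ k ∉ Finset.range b, h k = 0 := by
    intro k hk
    simp only [Finset.mem_range, not_lt] at hk
    simp only [hhdef]
    rw [min_eq_right hk, sub_self, mul_zero]
  have hsumh : Summable h := summable_of_ne_finset_zero hzero
  have hsplit : (fun k : ℕ => ppmf lam k * (min k b : ℕ))
      = fun k => (b : ℝ) * ppmf lam k - h k := by
    funext k; simp [hhdef]; ring
  rw [truncMean, hsplit, hsumb.tsum_sub hsumh, tsum_mul_left, htot,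
    tsum_eq_sum hzero]
  have : ∑ k ∈ Finset.range b, h k
      = ∑ j ∈ Finset.range b, ((b : ℝ) - j) * ppmf lam j := by
    apply Finset.sum_congr rfl
    intro k hk
    rw [Finset.mem_range] at hk
    simp only [hhdef]
    rw [min_eq_left hk.le]
    ring
  rw [this]
  ring
end
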